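/- Let E be a real Banach space and G : E × E → ℝ a continuous bilinear form such that the induced map G : E → E* is a topological isomorphism. If V ⊆ E is a closed subspace such that the restriction of G to V × V also induces a topological isomorphism V → V*, then E decomposes as the direct sum E = V ⊕ V^⊥G, where V^⊥G = {e ∈ E : G(e, v) = 0 for all v ∈ V}. -/
import Mathlib


/-- The `G`-orthogonal complement `V^⊥G = {e ∈ E : G(e,v) = 0 for all v ∈ V}` of a
subspace `V` with respect to a continuous bilinear form `G`. -/
def perpG {E : Type*} [NormedAddCommGroup E] [NormedSpace ℝ E]
    (G : E →L[ℝ] E →L[ℝ] ℝ) (V : Submodule ℝ E) : Submodule ℝ E where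
  carrier := {e : E | ∀ v ∈ V, G e v = 0}
  add_mem' := by
    intro a b ha hb v hv
    simp only [Set.mem_setOf_eq] at *
    simp [map_add, ha v hv, hb v hv]
  zero_mem' := by intro v hv; simp
  smul_mem' := by
    intro c a ha v hv
    simp only [Set.mem_setOf_eq] at *
    simp [map_smul, ha v hv]

/-- Let `E` be a real Banach space and `G` a continuous bilinear form on `E` such that the
induced map `E → E*` is a topological isomorphism (being a continuous linear bijection between
Banach spaces, by the open mapping theorem bijectivity suffices).  If `V ⊆ E` is a closed
subspace such that the restriction of `G` to `V × V` also induces a topological isomorphism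
`V → V*`, then `E = V ⊕ V^⊥G`. -/
theorem stmt0 {E : Type*} [NormedAddCommGroup E] [NormedSpace ℝ E] [CompleteSpace E]
    (G : E →L[ℝ] E →L[ℝ] ℝ)
    (hG : Function.Bijective fun e : E => G e)
    (V : Submodule ℝ E) (hVclosed : IsClosed (V : Set E))
    (hGV : Function.Bijective fun v : V => ((G (v : E)).comp V.subtypeL)) :
    IsCompl V (perpG G V) := by
  constructor
  · rw [Submodule.disjoint_def]
    intro x hxV hxP
    have h0 : (fun v : V => ((G (v : E)).comp V.subtypeL)) ⟨x, hxV⟩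
        = (fun v : V => ((G (v : E)).comp V.subtypeL)) 0 := by
      ext w
      simpa using hxP w w.2
    have := hGV.1 h0
    simpa using congrArg Subtype.val this
  · rw [codisjoint_iff, eq_top_iff]
    intro e _
    obtain ⟨v, hv⟩ := hGV.2 ((G e).comp V.subtypeL)
    have heq : e = (v : E) + (e - v) := by abel
    rw [heq]
    refine Submodule.add_mem_sup v.2 (fun w hw => ?_)
    have h1 := congrArg (fun f => f ⟨w, hw⟩) hv
    simp only [ContinuousLinearMap.comp_apply, Submodule.subtypeL_apply] at h1
    simp [map_sub, h1]
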